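/- The bivariate q-Hermite polynomials defined by H_{n+1}(x,s,q) = x H_n(x,s,q) - (1-q^n) s H_{n-1}(x,s,q), H_0 = 1, H_1 = x, satisfy H_n(x + (1-q)s D_q, s, q) 1 = x^n, i.e., substituting the operator x + (1-q)s D_q for x in H_n and applying to the constant polynomial 1 yields x^n. -/

import Mathlib

open Finset

/-- The q-analogue `[n]_q = (1-q^n)/(1-q)`. -/
noncomputable def qNum {F : Type*} [Field F] (q : F) (n : ℕ) : F := (1 - q ^ n) / (1 - q)

/-- The q-factorial `[n]_q! = [1]_q [2]_q ⋯ [n]_q`. -/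
noncomputable def qFact {F : Type*} [Field F] (q : F) (n : ℕ) : F :=
  ∏ j ∈ Finset.Icc 1 n, qNum q j

/-- The q-binomial (Gaussian) coefficient `[n choose k]_q = [n]_q!/([k]_q! [n-k]_q!)`,
zero when `k > n`. -/
noncomputable def qBinom {F : Type*} [Field F] (q : F) (n k : ℕ) : F :=
  if k ≤ n then qFact q n / (qFact q k * qFact q (n - k)) else 0

/-- The q-differentiation operator on polynomials, `D_q x^n = [n]_q x^{n-1}`. -/
noncomputable def Dq {F : Type*} [Field F] (q : F) (p : Polynomial F) : Polynomial F :=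
  Polynomial.C (1 / (1 - q)) * (p - p.comp (Polynomial.C q * Polynomial.X)).divX

/-- The bivariate q-Hermite polynomials: `H_0 = 1`, `H_1 = x`,
`H_{n+1} = x H_n - (1-qⁿ) s H_{n-1}`. -/
noncomputable def qHermite {F : Type*} [Field F] (q s : F) : ℕ → Polynomial F
  | 0 => 1
  | 1 => Polynomial.X
  | (n + 2) => Polynomial.X * qHermite q s (n + 1) -
      Polynomial.C ((1 - q ^ (n + 1)) * s) * qHermite q s n

/-- The operator `x + (1-q) s D_q` (multiplication by `x` plus `(1-q)s` times
q-differentiation). -/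
noncomputable def qHermiteOp {F : Type*} [Field F] (q s : F) (p : Polynomial F) : Polynomial F :=
  Polynomial.X * p + Polynomial.C ((1 - q) * s) * Dq q p

open Polynomial

lemma Dq_add {F : Type*} [Field F] (q : F) (p r : Polynomial F) :
    Dq q (p + r) = Dq q p + Dq q r := by
  unfold Dq
  rw [add_comp]
  have h : p + r - (p.comp (C q * X) + r.comp (C q * X)) =
      (p - p.comp (C q * X)) + (r - r.comp (C q * X)) := by ring
  rw [h, divX_add, mul_add]

lemma Dq_smul {F : Type*} [Field F] (q c : F) (p : Polynomial F) :
    Dq q (c • p) = c • Dq q p := by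
  unfold Dq
  rw [smul_eq_C_mul, smul_eq_C_mul, mul_comp, C_comp, ← mul_sub, divX_C_mul]
  ring

lemma Dq_pow {F : Type*} [Field F] (q : F) (m : ℕ) :
    Dq q (X ^ m : Polynomial F) = C ((1 - q ^ m) / (1 - q)) * X ^ (m - 1) := by
  unfold Dq
  rw [pow_comp, X_comp, mul_pow, ← C_pow]
  have h : (X : Polynomial F) ^ m - C (q ^ m) * X ^ m = C (1 - q ^ m) * X ^ m := by
    rw [C_sub, sub_mul, C_1, one_mul]
  rw [h, divX_C_mul, divX_X_pow]
  cases m with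
  | zero => simp
  | succ k =>
    simp only [Nat.succ_ne_zero, if_false]
    rw [← mul_assoc, ← C_mul]
    congr 2
    ring

lemma qHermiteOp_pow {F : Type*} [Field F] (q s : F) (hq : q ≠ 1) (m : ℕ) :
    qHermiteOp q s (X ^ m : Polynomial F) =
      X ^ (m + 1) + C ((1 - q ^ m) * s) * X ^ (m - 1) := by
  unfold qHermiteOp
  rw [Dq_pow, ← mul_assoc, ← C_mul]
  have h1q : (1 : F) - q ≠ 0 := sub_ne_zero_of_ne (Ne.symm hq)
  have hx : (X : Polynomial F) * X ^ m = X ^ (m + 1) := (pow_succ' X m).symm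
  rw [hx]
  congr 2
  rw [C_inj]
  field_simp

noncomputable def opL {F : Type*} [Field F] (q s : F) : Polynomial F →ₗ[F] Polynomial F where
  toFun := qHermiteOp q s
  map_add' p r := by unfold qHermiteOp; rw [Dq_add]; ring
  map_smul' c p := by
    show qHermiteOp q s (c • p) = c • qHermiteOp q s p
    unfold qHermiteOp
    rw [Dq_smul]
    simp only [smul_eq_C_mul]
    ring

lemma qHermiteOp_sum_key {F : Type*} [Field F] (q s : F) (p : Polynomial F) :
    (p.sum fun k a => a • ((qHermiteOp q s)^[k] (1 : Polynomial F))) =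
      (Polynomial.aeval (opL q s) p) 1 := by
  rw [Polynomial.aeval_endomorphism]
  congr 1
  ext k a
  rw [Module.End.pow_apply]
  rfl

lemma Dq_one {F : Type*} [Field F] (q : F) : Dq q (1 : Polynomial F) = 0 := by
  unfold Dq; simp

/-- `H_n(x + (1-q) s D_q, s, q) 1 = xⁿ`: substituting the operator `x + (1-q)s D_q`
for `x` in `H_n(x,s,q) = Σ_k h(n,k) x^k` (i.e. applying `Σ_k h(n,k) (x+(1-q)sD_q)^k`
to the constant polynomial 1) yields `xⁿ`. -/
theorem qHermite_op_umbral {F : Type*} [Field F] (q s : F) (hq : q ≠ 1) (n : ℕ) :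
    ((qHermite q s n).sum fun k a => a • ((qHermiteOp q s)^[k] (1 : Polynomial F))) =
      Polynomial.X ^ n := by
  induction n using Nat.twoStepInduction with
  | zero =>
    show ((1 : Polynomial F).sum fun k a => a • ((qHermiteOp q s)^[k] (1 : Polynomial F))) = _
    rw [qHermiteOp_sum_key]
    simp
  | one =>
    show ((X : Polynomial F).sum fun k a => a • ((qHermiteOp q s)^[k] (1 : Polynomial F))) = _
    rw [qHermiteOp_sum_key, Polynomial.aeval_X]
    show qHermiteOp q s 1 = X ^ 1
    unfold qHermiteOp
    rw [Dq_one]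
    simp
  | more n ih1 ih2 =>
    rw [qHermiteOp_sum_key] at ih1 ih2 ⊢
    have hrec : qHermite q s (n + 2) =
        X * qHermite q s (n + 1) - C ((1 - q ^ (n + 1)) * s) * qHermite q s n := rfl
    rw [hrec, map_sub, map_mul, map_mul, Polynomial.aeval_X, Polynomial.aeval_C,
      LinearMap.sub_apply, Module.End.mul_apply, Module.End.mul_apply, ih1, ih2]
    show qHermiteOp q s (X ^ (n + 1)) -
        (algebraMap F (Module.End F (Polynomial F)) ((1 - q ^ (n + 1)) * s)) (X ^ n) = X ^ (n + 2)
    rw [qHermiteOp_pow q s hq, Module.algebraMap_end_apply, smul_eq_C_mul]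
    simp
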